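/- arXiv:2308.01718 — 4 statements merged into one kernel-verified Lean document; each statement's English description precedes it below -/
import Mathlib

section
/- Let n ≥ 1, l ∈ [0,2n], and 𝐚 = (a_1,…,a_l) a strictly increasing sequence of integers in [1,2n]. Suppose a_l is even and there exists r ∈ [1,l−1] such that a_{l−r} = a_l − r is odd. Then Rem(𝐚) = Rem(a_1,…,a_{l−r−1}) ⊔ [a_l − t, a_l], where t ∈ [0,r] is the maximal odd integer such that a_l − t < 2(l−t) − |Rem(a_1,…,a_{l−r−1})|, with the convention that [a_l − t, a_l] = ∅ (i.e., t = −1) when no such odd t exists. -/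
/-- `remAux` computes the set of removable entries of a strictly increasing
sequence, given as a list in *reversed* order (so the head is the last entry). -/
def remAux : List ℕ → Finset ℕ
  | [] => ∅
  | [_] => ∅
  | b :: a :: rest =>
    if Even b ∧ a + 1 = b ∧ b + (remAux rest).card + 1 < 2 * (rest.length + 2) then
      insert a (insert b (remAux rest))
    else remAux (a :: rest)

/-- `remSet 𝐚` : the set `Rem(𝐚)` of removable entries of the strictly
increasing sequence `𝐚 = (a_1, …, a_l)` (given in its natural order). -/
def remSet (l : List ℕ) : Finset ℕ := remAux l.reverse

/-- `redSeq 𝐚` : the reduction `red(𝐚)`, i.e. `𝐚` with the removable entries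
removed. -/
def redSeq (l : List ℕ) : List ℕ := l.filter (fun x => decide (x ∉ remSet l))

lemma remAux_mem : ∀ (L : List ℕ), ∀ x ∈ remAux L, x ∈ L := by
  intro L
  induction L using remAux.induct with
  | case1 => simp [remAux]
  | case2 b => simp [remAux]
  | case3 b a rest h ih =>
    intro x hx; rw [remAux, if_pos h] at hx
    simp only [Finset.mem_insert] at hx
    rcases hx with rfl | rfl | hx
    · simp
    · simp
    · simp only [List.mem_cons]; right; right; exact ih x hx
  | case4 b a rest h ih1 ih2 =>
    intro x hx; rw [remAux, if_neg h] at hx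
    have := ih2 x hx
    simp only [List.mem_cons] at this ⊢; tauto

lemma remAux_odd_head (b : ℕ) (hb : ¬ Even b) (L : List ℕ) :
    remAux (b :: L) = remAux L := by
  cases L with
  | nil => simp [remAux]
  | cons a rest => rw [remAux, if_neg (by tauto)]

/-- descending run `[e, e-1, …, e-k+1]` -/
def descRun : ℕ → ℕ → List ℕ
  | _, 0 => []
  | e, (k+1) => e :: descRun (e-1) k

lemma descRun_length : ∀ e k, (descRun e k).length = k := by
  intro e k
  induction k generalizing e with
  | zero => rfl
  | succ k ih => simp [descRun, ih]

lemma descRun_reverse : ∀ k e, k ≤ e + 1 →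
    (descRun e k).reverse = List.range' (e + 1 - k) k := by
  intro k
  induction k with
  | zero => simp [descRun]
  | succ k ih =>
    intro e he
    rcases Nat.eq_zero_or_pos k with rfl | hk0
    · simp [descRun, List.range']
    · rw [descRun, List.reverse_cons, ih (e-1) (by omega),
        show e - 1 + 1 - k = e - k from by omega,
        show e + 1 - (k+1) = e - k from by omega, List.range'_concat,
        show e - k + 1 * k = e from by omega]

/-- The key computation: `remAux` applied to a descending consecutive run of
length `2*k` with odd bottom value `v`, prepended to an arbitrary list `rest`
whose removable set consists of values `< v`. -/
lemma runLemma (v m C u₀ : ℕ) (hv : Odd v) (rest : List ℕ)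
    (hm : rest.length = m) (hC : (remAux rest).card = C)
    (hlt : ∀ x ∈ remAux rest, x < v)
    (hu1 : 1 ≤ u₀) (hlo : v + C < 2*m + 2*u₀)
    (hhi : 2*m + 2*u₀ ≤ v + C + 2 ∨ u₀ = 1) :
    ∀ k, remAux (descRun (v + 2*k - 1) (2*k) ++ rest) =
      if u₀ ≤ k then Finset.Icc (v + 2*u₀ - 2) (v + 2*k - 1) ∪ remAux rest
      else remAux rest := by
  have hv1 : 1 ≤ v := hv.pos
  intro k
  induction k with
  | zero =>
    rw [if_neg (by omega)]
    simp [descRun]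
  | succ k ih =>
    have hrw : descRun (v + 2*(k+1) - 1) (2*(k+1)) =
        (v+2*k+1) :: (v+2*k) :: descRun (v + 2*k - 1) (2*k) := by
      rw [show v + 2*(k+1) - 1 = v + 2*k + 1 from by omega,
        show 2*(k+1) = (2*k+1)+1 from by omega, descRun,
        show v + 2*k + 1 - 1 = v + 2*k from by omega, descRun]
    rw [hrw]
    have hlen : (descRun (v + 2*k - 1) (2*k) ++ rest).length = 2*k + m := by
      simp [descRun_length, hm]
    have heb : Even (v + 2*k + 1) := by
      rcases hv with ⟨s, rfl⟩; exact ⟨s + k + 1, by ring⟩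
    by_cases hk : u₀ ≤ k
    · -- inner list has removals; top pair is removed as well
      have hS : remAux (descRun (v + 2*k - 1) (2*k) ++ rest)
          = Finset.Icc (v + 2*u₀ - 2) (v + 2*k - 1) ∪ remAux rest := by
        rw [ih, if_pos hk]
      have hdisj : Disjoint (Finset.Icc (v + 2*u₀ - 2) (v + 2*k - 1)) (remAux rest) := by
        rw [Finset.disjoint_right]
        intro x hx
        have := hlt x hx
        simp only [Finset.mem_Icc]
        omega
      have hcard : (Finset.Icc (v + 2*u₀ - 2) (v + 2*k - 1) ∪ remAux rest).card
          = (2*k - 2*u₀ + 2) + C := by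
        rw [Finset.card_union_of_disjoint hdisj, Nat.card_Icc, hC]
        omega
      rw [List.cons_append, List.cons_append, remAux, if_pos ?cond]
      case cond =>
        refine ⟨heb, rfl, ?_⟩
        rw [hlen, hS, hcard]
        omega
      rw [if_pos (by omega), hS]
      ext x
      by_cases hx : x ∈ remAux rest
      · simp only [Finset.mem_insert, Finset.mem_union, Finset.mem_Icc, hx, or_true]
      · simp only [Finset.mem_insert, Finset.mem_union, Finset.mem_Icc, hx, or_false]
        omega
    · have hS : remAux (descRun (v + 2*k - 1) (2*k) ++ rest) = remAux rest := by
        rw [ih, if_neg hk]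
      by_cases hk1 : u₀ = k + 1
      · -- the first removal happens exactly at the top pair
        rw [List.cons_append, List.cons_append, remAux, if_pos ?cond2]
        case cond2 =>
          refine ⟨heb, rfl, ?_⟩
          rw [hlen, hS, hC]
          omega
        rw [hS, if_pos (by omega)]
        ext x
        by_cases hx : x ∈ remAux rest
        · simp only [Finset.mem_insert, Finset.mem_union, Finset.mem_Icc, hx, or_true]
        · simp only [Finset.mem_insert, Finset.mem_union, Finset.mem_Icc, hx, or_false]
          omega
      · -- no removal at all
        rw [if_neg (by omega)]
        rw [List.cons_append, List.cons_append, remAux, if_neg ?cond3]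
        case cond3 =>
          rw [hlen, hS, hC]
          intro ⟨_, _, hlt'⟩
          omega
        have hodd2 : ¬ Even (v + 2*k) := by
          rcases hv with ⟨s, rfl⟩
          simp [Nat.even_add_one, parity_simps]
        rw [remAux_odd_head _ hodd2, hS]

lemma chain_getD (a : List ℕ) (hinc : a.Chain' (· < ·)) :
    ∀ d i, i + d < a.length → a.getD i 0 + d ≤ a.getD (i+d) 0 := by
  intro d
  induction d with
  | zero => simp
  | succ d ih =>
    intro i hi
    have h1 := ih i (by omega)
    have h2 := List.isChain_iff_getElem.mp hinc (i + d) (by omega)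
    have e1 : a.getD (i+d) 0 = a[i+d]'(by omega) := List.getD_eq_getElem a 0 (by omega)
    have h3 : i+(d+1) = (i+d)+1 := by omega
    have e2 : a.getD (i+(d+1)) 0 = a.getD ((i+d)+1) 0 := by rw [h3]
    have e3 : a.getD ((i+d)+1) 0 = a[(i+d)+1]'(by omega) := List.getD_eq_getElem a 0 (by omega)
    omega

lemma drop_run (a : List ℕ) (hinc : a.Chain' (· < ·)) (r v : ℕ) (hrl : r + 1 ≤ a.length)
    (hv : a.getD (a.length - r - 1) 0 = v)
    (hlast : a.getD (a.length - 1) 0 = v + r) :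
    a.drop (a.length - r - 1) = List.range' v (r+1) := by
  apply List.ext_getElem
  · simp; omega
  · intro i h1 h2
    rw [List.getElem_drop, List.getElem_range']
    have hiq : i < r + 1 := by simpa using h2
    have hqi : a.length - r - 1 + i < a.length := by omega
    have e1 : a.getD (a.length - r - 1 + i) 0 = a[a.length - r - 1 + i]'hqi :=
      List.getD_eq_getElem a 0 hqi
    have hlow := chain_getD a hinc i (a.length - r - 1) (by omega)
    have hup := chain_getD a hinc (a.length - 1 - (a.length - r - 1 + i))
      (a.length - r - 1 + i) (by omega)
    rw [show a.length - r - 1 + i + (a.length - 1 - (a.length - r - 1 + i))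
        = a.length - 1 from by omega, hlast] at hup
    omega

theorem stmt8 (n : ℕ) (hn : 1 ≤ n) (a : List ℕ)
    (hinc : a.Chain' (· < ·)) (hbd : ∀ x ∈ a, 1 ≤ x ∧ x ≤ 2 * n)
    (hlen : a.length ≤ 2 * n) (h : a ≠ [])
    (heven : Even (a.getLast h)) (r : ℕ) (hr1 : 1 ≤ r) (hr2 : r ≤ a.length - 1)
    (hval : a.getD (a.length - r - 1) 0 + r = a.getLast h)
    (hodd : Odd (a.getD (a.length - r - 1) 0)) :
    (∀ t, (Odd t ∧ t ≤ r ∧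
        a.getLast h + (remSet (a.take (a.length - r - 1))).card <
          2 * (a.length - t) + t) →
      (∀ t', (Odd t' ∧ t' ≤ r ∧
        a.getLast h + (remSet (a.take (a.length - r - 1))).card <
          2 * (a.length - t') + t') → t' ≤ t) →
      remSet a =
        remSet (a.take (a.length - r - 1)) ∪
          Finset.Icc (a.getLast h - t) (a.getLast h) ∧
      Disjoint (remSet (a.take (a.length - r - 1)))
        (Finset.Icc (a.getLast h - t) (a.getLast h))) ∧
    ((∀ t, ¬ (Odd t ∧ t ≤ r ∧
        a.getLast h + (remSet (a.take (a.length - r - 1))).card <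
          2 * (a.length - t) + t)) →
      remSet a = remSet (a.take (a.length - r - 1))) := by
  classical
  have hl1 : 1 ≤ a.length := List.length_pos_iff.mpr h
  have hrl : r + 1 ≤ a.length := by omega
  have hvodd : Odd (a.getD (a.length - r - 1) 0) := hodd
  have hv1 : 1 ≤ a.getD (a.length - r - 1) 0 := hvodd.pos
  have hlaste : a.getLast h = a.getD (a.length - 1) 0 :=
    (List.getLast_eq_getElem h).trans (List.getD_eq_getElem a 0 (by omega)).symm
  have hlast : a.getD (a.length - 1) 0 = a.getD (a.length - r - 1) 0 + r := by
    rw [hval]; exact hlaste.symm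
  have hdrop := drop_run a hinc r (a.getD (a.length - r - 1) 0) hrl rfl hlast
  have hrodd : r % 2 = 1 := by
    obtain ⟨s, hs⟩ := hvodd
    obtain ⟨w, hw⟩ := heven
    omega
  have hk2 : 2 * ((r+1)/2) = r + 1 := by omega
  have hm : ((a.take (a.length - r - 1)).reverse).length = a.length - r - 1 := by
    simp; omega
  have hlt : ∀ x ∈ remAux ((a.take (a.length - r - 1)).reverse),
      x < a.getD (a.length - r - 1) 0 := by
    intro x hx
    have hx1 : x ∈ a.take (a.length - r - 1) := by
      have := remAux_mem _ x hx
      rwa [List.mem_reverse] at this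
    obtain ⟨i, hi, hxe⟩ := List.getElem_of_mem hx1
    have hiq : i < a.length - r - 1 := by simp only [List.length_take] at hi; omega
    rw [List.getElem_take] at hxe
    have e1 : a.getD i 0 = a[i]'(by omega) := List.getD_eq_getElem a 0 (by omega)
    have hlow := chain_getD a hinc (a.length - r - 1 - i) i (by omega)
    rw [show i + (a.length - r - 1 - i) = a.length - r - 1 from by omega] at hlow
    omega
  -- abbreviations
  set v := a.getD (a.length - r - 1) 0 with hvdef
  set C := (remAux ((a.take (a.length - r - 1)).reverse)).card with hCdef
  have hCeq : (remSet (a.take (a.length - r - 1))).card = C := rfl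
  set u₀ := (v + C - 2*(a.length - r - 1))/2 + 1 with hu₀
  have hu1 : 1 ≤ u₀ := by omega
  have hlo : v + C < 2*(a.length - r - 1) + 2*u₀ := by omega
  have hhi : 2*(a.length - r - 1) + 2*u₀ ≤ v + C + 2 ∨ u₀ = 1 := by omega
  have hrun := runLemma v (a.length - r - 1) C u₀ hvodd
    ((a.take (a.length - r - 1)).reverse) hm rfl hlt hu1 hlo hhi ((r+1)/2)
  have hde : descRun (v + 2*((r+1)/2) - 1) (2*((r+1)/2)) = descRun (a.getLast h) (r+1) := by
    rw [show v + 2*((r+1)/2) - 1 = a.getLast h from by omega, hk2]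
  have hrev : a.reverse = descRun (a.getLast h) (r+1) ++ (a.take (a.length - r - 1)).reverse := by
    conv_lhs => rw [← List.take_append_drop (a.length - r - 1) a]
    rw [List.reverse_append, hdrop]
    congr 1
    have hd := descRun_reverse (r+1) (a.getLast h) (by omega)
    rw [show a.getLast h + 1 - (r+1) = v from by omega] at hd
    rw [← hd, List.reverse_reverse]
  have hsa : remSet a = remAux (descRun (v + 2*((r+1)/2) - 1) (2*((r+1)/2))
      ++ (a.take (a.length - r - 1)).reverse) := by
    rw [remSet, hrev, hde]
  have hst : remSet (a.take (a.length - r - 1))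
      = remAux ((a.take (a.length - r - 1)).reverse) := rfl
  constructor
  · rintro t ⟨htodd, htr, htc⟩ hmax
    have ht1 : t % 2 = 1 := Nat.odd_iff.mp htodd
    rw [hCeq] at htc
    have hu0k : u₀ ≤ (r+1)/2 := by omega
    have hmx := hmax (2*((r+1)/2) - 2*u₀ + 1)
      ⟨Nat.odd_iff.mpr (by omega), by omega, by rw [hCeq]; omega⟩
    have htval : t = 2*((r+1)/2) - 2*u₀ + 1 := by omega
    have hicc : Finset.Icc (a.getLast h - t) (a.getLast h)
        = Finset.Icc (v + 2*u₀ - 2) (v + 2*((r+1)/2) - 1) := by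
      congr 1 <;> omega
    constructor
    · rw [hsa, hrun, if_pos hu0k, hst, hicc]
      exact Finset.union_comm _ _
    · rw [hst, hicc, Finset.disjoint_left]
      intro x hx
      have := hlt x hx
      simp only [Finset.mem_Icc]
      omega
  · intro hno
    have h1 : ¬ (a.getLast h + C < 2 * (a.length - 1) + 1) := by
      intro hc
      exact hno 1 ⟨⟨0, by ring⟩, hr1, by rw [hCeq]; exact hc⟩
    have hu0k : ¬ u₀ ≤ (r+1)/2 := by omega
    rw [hsa, hrun, if_neg hu0k, hst]
end

section
/- Let n ≥ 1, l ∈ [0,2n], and 𝐚 = (a_1,…,a_l) a strictly increasing sequence of integers in [1,2n]. If i ∈ [1,l] is such that a_i ∉ Rem(𝐚), then Rem(𝐚) = Rem(a_1,…,a_{i−1}) ⊔ ({a_{i+1},…,a_l} ∩ Rem(𝐚)). -/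
theorem remAux_subset : ∀ L : List ℕ, remAux L ⊆ L.toFinset := by
  intro L
  induction L using remAux.induct with
  | case1 => simp [remAux]
  | case2 x => simp [remAux]
  | case3 b a rest h ih =>
      rw [remAux, if_pos h]
      intro y hy
      simp only [Finset.mem_insert] at hy
      rcases hy with rfl | rfl | hy
      · simp
      · simp
      · have := ih hy; simp at this ⊢; tauto
  | case4 b a rest h _ ih =>
      rw [remAux, if_neg h]
      intro y hy
      have := ih hy; simp at this ⊢; tauto

theorem lemA (P : List ℕ) (R : List ℕ) (x : ℕ)
    (hnd : (P ++ x :: R).Nodup) (hx : x ∉ remAux (P ++ x :: R)) :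
    remAux (P ++ x :: R) = remAux R ∪ (P.toFinset ∩ remAux (P ++ x :: R)) := by
  cases P with
  | nil =>
      simp only [List.nil_append, List.toFinset_nil, Finset.empty_inter, Finset.union_empty] at *
      cases R with
      | nil => rfl
      | cons a rest =>
          by_cases h : Even x ∧ a + 1 = x ∧ x + (remAux rest).card + 1 < 2 * (rest.length + 2)
          · exact absurd (by rw [remAux, if_pos h]; simp) hx
          · rw [remAux, if_neg h]
  | cons p1 P2 =>
      obtain ⟨a, T, hT⟩ : ∃ a T, P2 ++ x :: R = a :: T := by
        cases P2 <;> exact ⟨_, _, rfl⟩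
      simp only [List.cons_append, hT] at hx ⊢
      by_cases h : Even p1 ∧ a + 1 = p1 ∧ p1 + (remAux T).card + 1 < 2 * (T.length + 2)
      · -- pair (a, p1) removed
        rw [remAux, if_pos h] at hx ⊢
        cases P2 with
        | nil =>
            simp only [List.nil_append, List.cons.injEq] at hT
            obtain ⟨rfl, rfl⟩ := hT
            simp at hx
        | cons p2 P3 =>
            simp only [List.cons_append, List.cons.injEq] at hT
            obtain ⟨rfl, rfl⟩ := hT
            have hxT : x ∉ remAux (P3 ++ x :: R) := fun hmem => hx (by simp [hmem])
            have hndT : (P3 ++ x :: R).Nodup := by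
              simp only [List.cons_append, List.nodup_cons] at hnd; exact hnd.2.2
            have ih := lemA P3 R x hndT hxT
            ext y
            simp only [Finset.mem_insert, Finset.mem_union, Finset.mem_inter,
              List.toFinset_cons]
            constructor
            · rintro (rfl | rfl | hy)
              · exact Or.inr ⟨Or.inr (Or.inl rfl), Or.inl rfl⟩
              · exact Or.inr ⟨Or.inl rfl, Or.inr (Or.inl rfl)⟩
              · rw [ih] at hy
                rcases Finset.mem_union.mp hy with hy | hy
                · exact Or.inl hy
                · obtain ⟨hy1, hy2⟩ := Finset.mem_inter.mp hy
                  exact Or.inr ⟨Or.inr (Or.inr hy1), Or.inr (Or.inr hy2)⟩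
            · rintro (hy | ⟨_, hy2⟩)
              · right; right; rw [ih]; exact Finset.mem_union_left _ hy
              · exact hy2
      · -- p1 not removed with a
        rw [remAux, if_neg h] at hx ⊢
        rw [← hT] at hx ⊢
        have hndT : (P2 ++ x :: R).Nodup := by
          rw [hT]
          exact (List.nodup_cons.mp (by simpa [hT] using hnd : (p1 :: a :: T).Nodup)).2
        have ih := lemA P2 R x hndT hx
        have hp1 : p1 ∉ remAux (P2 ++ x :: R) := fun hmem => by
          have h1 := remAux_subset _ hmem
          rw [List.mem_toFinset, hT] at h1
          exact (List.nodup_cons.mp (by simpa [hT] using hnd : (p1 :: a :: T).Nodup)).1 h1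
        have key : (p1 :: P2).toFinset ∩ remAux (P2 ++ x :: R)
            = P2.toFinset ∩ remAux (P2 ++ x :: R) := by
          ext y
          simp only [List.toFinset_cons, Finset.mem_inter, Finset.mem_insert]
          constructor
          · rintro ⟨rfl | h1, h2⟩
            · exact absurd h2 hp1
            · exact ⟨h1, h2⟩
          · rintro ⟨h1, h2⟩; exact ⟨Or.inr h1, h2⟩
        rw [key, ← ih]
termination_by P.length

theorem stmt9 (n : ℕ) (hn : 1 ≤ n) (a : List ℕ)
    (hinc : a.Chain' (· < ·)) (hbd : ∀ x ∈ a, 1 ≤ x ∧ x ≤ 2 * n)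
    (hlen : a.length ≤ 2 * n) (i : ℕ) (hi1 : 1 ≤ i) (hil : i ≤ a.length)
    (hni : a.getD (i - 1) 0 ∉ remSet a) :
    remSet a = remSet (a.take (i - 1)) ∪ ((a.drop i).toFinset ∩ remSet a) ∧
    Disjoint (remSet (a.take (i - 1))) ((a.drop i).toFinset ∩ remSet a) := by
  set x := a.getD (i - 1) 0 with hxdef
  have hlt : i - 1 < a.length := by omega
  have hdecomp : a = a.take (i - 1) ++ x :: a.drop i := by
    conv_lhs => rw [← List.take_append_drop (i - 1) a]
    congr 1
    rw [List.drop_eq_getElem_cons hlt]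
    congr 1
    · rw [hxdef, List.getD_eq_getElem a 0 hlt]
    · congr 1; omega
  have hnd : a.Nodup :=
    List.Pairwise.imp (fun h => Nat.ne_of_lt h) (List.isChain_iff_pairwise.mp hinc)
  have hrev : a.reverse = (a.drop i).reverse ++ x :: (a.take (i - 1)).reverse := by
    conv_lhs => rw [hdecomp]
    simp
  have hndrev : ((a.drop i).reverse ++ x :: (a.take (i - 1)).reverse).Nodup := by
    rw [← hrev, List.nodup_reverse]; exact hnd
  have hx' : x ∉ remAux ((a.drop i).reverse ++ x :: (a.take (i - 1)).reverse) := by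
    rw [← hrev]; exact hni
  have key := lemA _ _ _ hndrev hx'
  rw [← hrev] at key
  have hmain : remSet a = remSet (a.take (i - 1)) ∪ ((a.drop i).toFinset ∩ remSet a) := by
    show remAux a.reverse = _
    rw [key, List.toFinset_reverse]
    rfl
  refine ⟨hmain, ?_⟩
  have hdisj : List.Disjoint (a.take (i - 1)) (x :: a.drop i) := by
    have := hnd
    rw [hdecomp, List.nodup_append] at this
    exact fun y h1 h2 => this.2.2 y h1 y h2 rfl
  rw [Finset.disjoint_left]
  intro y hy1 hy2
  have h1 : y ∈ (a.take (i - 1)).toFinset := by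
    have := remAux_subset _ hy1
    rwa [List.toFinset_reverse] at this
  have h2 : y ∈ (a.drop i).toFinset := (Finset.mem_inter.mp hy2).1
  rw [List.mem_toFinset] at h1 h2
  exact hdisj h1 (List.mem_cons_of_mem _ h2)
end

section
/- Let n ≥ 1, l ∈ [0,2n], and 𝐚 = (a_1,…,a_l) a strictly increasing sequence of integers in [1,2n]. Write red(𝐚) = (a_{i_1}, a_{i_2}, …, a_{i_k}) with 1 ≤ i_1 < i_2 < ⋯ < i_k ≤ l. Then for each t ∈ [1,k], one has i_t = t + |Rem(a_1, a_2, …, a_{i_t − 1})|. -/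
lemma mem_of_mem_remAux : ∀ {L : List ℕ} {y : ℕ}, y ∈ remAux L → y ∈ L := by
  intro L
  induction L using remAux.induct with
  | case1 => simp [remAux]
  | case2 => simp [remAux]
  | case3 b c rest hc ih =>
    intro y hy
    rw [remAux, if_pos hc] at hy
    simp at hy ⊢
    rcases hy with h | h | h
    · tauto
    · tauto
    · have := ih h; tauto
  | case4 b c rest hc ih1 ih2 =>
    intro y hy
    rw [remAux, if_neg hc] at hy
    have := ih2 hy
    simp at this ⊢
    tauto

lemma remAux_filter_lt : ∀ (L : List ℕ), L.Chain' (· > ·) →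
    ∀ (P S : List ℕ) (x : ℕ), L = P ++ x :: S → x ∉ remAux L →
    (remAux L).filter (· < x) = remAux S := by
  intro L
  induction L using remAux.induct with
  | case1 => intro _ P S x h; simp at h
  | case2 h =>
    intro _ P S x hps hx
    rcases P with _ | ⟨p, P⟩
    · simp at hps
      rw [hps.2]
      simp [remAux]
    · simp at hps
  | case3 b c rest hc ih =>
    intro hch P S x hps hx
    rw [remAux, if_pos hc] at hx ⊢
    have hpw := (List.isChain_iff_pairwise.mp hch)
    simp only [List.pairwise_cons] at hpw
    simp at hx
    push_neg at hx
    obtain ⟨hxc, hxb, hxr⟩ := hx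
    rcases P with _ | ⟨p, P⟩
    · simp at hps; exact absurd hps.1.symm hxb
    rcases P with _ | ⟨q, P⟩
    · simp at hps; exact absurd hps.2.1.symm hxc
    · simp at hps
      obtain ⟨rfl, rfl, hrest⟩ := hps
      have hchr : rest.Chain' (· > ·) := (hch.tail).tail
      have hxin : x ∈ rest := by rw [hrest]; simp
      have hbx : x < b := by
        exact hpw.1 x (List.mem_cons_of_mem _ hxin)
      have hcx : x < c := by
        have := hpw.2.1 x hxin
        exact this
      rw [Finset.filter_insert, if_neg (by omega), Finset.filter_insert, if_neg (by omega)]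
      exact ih hchr P S x hrest hxr
  | case4 b c rest hc ih1 ih2 =>
    intro hch P S x hps hx
    rw [remAux, if_neg hc] at hx ⊢
    have hpw := (List.isChain_iff_pairwise.mp hch)
    simp only [List.pairwise_cons] at hpw
    rcases P with _ | ⟨p, P⟩
    · simp at hps
      obtain ⟨rfl, rfl⟩ := hps
      apply Finset.filter_true_of_mem
      intro y hy
      have : y ∈ c :: rest := mem_of_mem_remAux hy
      exact hpw.1 y this
    · simp at hps
      obtain ⟨rfl, hrest⟩ := hps
      exact ih2 hch.tail P S x hrest hx

theorem stmt13 (n : ℕ) (hn : 1 ≤ n) (a : List ℕ)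
    (hinc : a.Chain' (· < ·)) (hbd : ∀ x ∈ a, 1 ≤ x ∧ x ≤ 2 * n)
    (hlen : a.length ≤ 2 * n)
    (t : ℕ) (ht1 : 1 ≤ t) (htk : t ≤ (redSeq a).length)
    (j : ℕ) (hj1 : 1 ≤ j) (hjl : j ≤ a.length)
    (hval : a.getD (j - 1) 0 = (redSeq a).getD (t - 1) 0) :
    j = t + (remSet (a.take (j - 1))).card := by
  have hil : j - 1 < a.length := by omega
  have htl : t - 1 < (redSeq a).length := by omega
  set i := j - 1 with hi
  have hj' : j = i + 1 := by omega
  set v := a[i] with hv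
  set pre := a.take i with hpre
  set suf := a.drop j with hsuf
  -- split a
  have hsplit : a = pre ++ v :: suf := by
    rw [hpre, hsuf, hj', hv]
    conv_lhs => rw [← List.take_append_drop i a, List.drop_eq_getElem_cons hil]
  have hpw : a.Pairwise (· < ·) := List.isChain_iff_pairwise.mp hinc
  have hnd : a.Nodup := hpw.imp (fun h => Nat.ne_of_lt h)
  -- v is in redSeq a
  have hvt : v = (redSeq a)[t-1] := by
    rw [hv, ← List.getD_eq_getElem _ 0 hil, ← List.getD_eq_getElem _ 0 htl, hval]
  have hvred : v ∈ redSeq a := hvt ▸ List.getElem_mem htl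
  have hvnot : v ∉ remSet a := by
    have := List.of_mem_filter hvred
    simpa using this
  -- key: filter
  have hrev : a.reverse = suf.reverse ++ v :: pre.reverse := by
    rw [hsplit]; simp
  have hchrev : a.reverse.Chain' (· > ·) := by
    exact List.isChain_reverse.mpr hinc
  have hkey : (remSet a).filter (· < v) = remSet pre := by
    have := remAux_filter_lt a.reverse hchrev suf.reverse pre.reverse v hrev
      (by rwa [remSet] at hvnot)
    rwa [remSet, remSet]
  -- elements of pre are < v
  have hprelt : ∀ x ∈ pre, x < v := by
    intro x hx
    rw [hsplit] at hpw
    exact (List.pairwise_append.mp hpw).2.2 x hx v (by simp)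
  set p : ℕ → Bool := fun x => decide (x ∉ remSet a) with hp
  have hred : redSeq a = pre.filter p ++ v :: suf.filter p := by
    rw [redSeq, ← hp]
    conv_lhs => rw [hsplit]
    rw [List.filter_append, List.filter_cons, if_pos (by simp [hp, hvnot])]
  set m := (pre.filter p).length with hm'
  -- v at index m
  have hm : (redSeq a)[m]? = some v := by
    rw [hred, List.getElem?_append_right (le_refl _)]
    simp
  have hmt : (redSeq a)[t-1]? = some v := by
    rw [List.getElem?_eq_getElem htl, ← hvt]
  -- nodup redSeq
  have hndred : (redSeq a).Nodup := (List.filter_sublist (l := a)).nodup hnd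
  have hteq : t - 1 = m := by
    exact (List.getElem?_inj (by rw [List.getElem?_eq_some_iff] at hmt; exact hmt.1)
      hndred).mp (by rw [hmt, hm])
  -- count removed in pre
  have hsub : remSet pre ⊆ pre.toFinset := by
    intro y hy
    have : y ∈ pre.reverse := mem_of_mem_remAux hy
    simp at this
    simpa using this
  have hndpre : pre.Nodup := (List.take_sublist i a).nodup hnd
  have hfc : pre.filter (fun x => decide (x ∈ remSet a)) =
      pre.filter (fun x => decide (x ∈ remSet pre)) := by
    apply List.filter_congr
    intro x hx
    simp only [decide_eq_decide]
    constructor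
    · intro hxr
      rw [← hkey]
      simp only [Finset.mem_filter]
      exact ⟨hxr, hprelt x hx⟩
    · intro hxr
      rw [← hkey] at hxr
      exact (Finset.mem_filter.mp hxr).1
  have hcard : (pre.filter (fun x => decide (x ∈ remSet a))).length = (remSet pre).card := by
    rw [hfc]
    have h1 : (pre.filter (fun x => decide (x ∈ remSet pre))).Nodup :=
      hndpre.filter _
    rw [← List.toFinset_card_of_nodup h1, List.toFinset_filter]
    congr 1
    have : (pre.toFinset.filter fun x => (decide (x ∈ remSet pre)) = true) =
        pre.toFinset ∩ remSet pre := by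
      simpa using (Finset.filter_mem_eq_inter (s := pre.toFinset) (t := remSet pre))
    rw [this, Finset.inter_eq_right.mpr hsub]
  have hsplitlen : (pre.filter p).length + (pre.filter (fun x => !(p x))).length
      = pre.length := (List.length_eq_length_filter_add p).symm
  have hnot : pre.filter (fun x => !(p x)) = pre.filter (fun x => decide (x ∈ remSet a)) := by
    simp [hp]
  have hlenpre : pre.length = i := by
    rw [hpre, List.length_take]
    omega
  rw [hnot, hcard] at hsplitlen
  omega
end

section
/- Let n ≥ 1, l ∈ [0,2n], and 𝐚 = (a_1,…,a_l) a strictly increasing sequence of integers in [1,2n]. Then red(𝐚) = 𝐚 if and only if 𝐚 is symplectic, i.e., a_i ≥ 2i − 1 for all i ∈ [1,l]. -/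
lemma getD_reverse (l : List ℕ) (j : ℕ) (h : j < l.length) :
    l.reverse.getD j 0 = l.getD (l.length - 1 - j) 0 := by
  rw [List.getD_eq_getElem?_getD, List.getD_eq_getElem?_getD, List.getElem?_reverse h]

lemma remAux_subset_s15 : ∀ (r : List ℕ), ∀ x ∈ remAux r, x ∈ r := by
  intro r
  induction r using remAux.induct with
  | case1 => simp [remAux]
  | case2 b => simp [remAux]
  | case3 b a rest hc ih =>
    intro x hx
    rw [remAux, if_pos hc] at hx
    simp only [Finset.mem_insert] at hx
    rcases hx with rfl | rfl | hx
    · simp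
    · simp
    · simp [ih x hx]
  | case4 b a rest hc ih1 ih2 =>
    intro x hx
    rw [remAux, if_neg hc] at hx
    have := ih2 x hx
    simp at this ⊢
    tauto

lemma remAux_tail {x : ℕ} {rest : List ℕ} (h : remAux (x :: rest) = ∅) :
    remAux rest = ∅ := by
  cases rest with
  | nil => simp [remAux]
  | cons c rest' =>
    rw [remAux] at h
    split at h
    · exact absurd h (by simp)
    · exact h

lemma remAux_main : ∀ (r : List ℕ), r.Chain' (· > ·) → (∀ x ∈ r, 1 ≤ x) →
    (remAux r = ∅ ↔ ∀ j < r.length, 2 * (r.length - j) - 1 ≤ r.getD j 0) := by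
  intro r
  induction r using remAux.induct with
  | case1 => simp [remAux]
  | case2 b =>
    intro _ hpos
    simp only [remAux, List.length_singleton]
    constructor
    · intro _ j hj
      interval_cases j
      simpa using hpos b (by simp)
    · intro _; trivial
  | case3 b a rest hc ih =>
    intro hch hpos
    rw [remAux, if_pos hc]
    constructor
    · intro h; exact absurd h (by simp)
    · intro hP
      have h0 := hP 0 (by simp)
      simp only [List.getD_cons_zero, List.length_cons] at h0
      omega
  | case4 b a rest hc ih1 ih2 =>
    intro hch hpos
    rw [List.Chain', List.isChain_cons_cons] at hch
    have ih' := ih2 hch.2 (fun x hx => by have := hpos x (by simp at hx ⊢; tauto); omega)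
    rw [remAux, if_neg hc, ih']
    constructor
    · intro hP j hj
      cases j with
      | zero =>
        have h0 := hP 0 (by simp)
        simp only [List.getD_cons_zero, List.length_cons] at h0 ⊢
        have hcard : (remAux rest).card = 0 := by
          rw [remAux_tail (ih'.mpr hP), Finset.card_empty]
        have hba : a < b := hch.1
        by_contra hlt
        push_neg at hlt
        exact hc ⟨⟨rest.length + 1, by omega⟩, by omega, by omega⟩
      | succ j =>
        simp only [List.length_cons] at hj
        have := hP j (by simp; omega)
        simp only [List.getD_cons_succ, List.length_cons] at this ⊢
        have h2 : rest.length + 1 + 1 - (j + 1) = rest.length + 1 - j := by omega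
        rw [h2]
        exact this
    · intro hP j hj
      simp only [List.length_cons] at hj
      have := hP (j + 1) (by simp; omega)
      simp only [List.getD_cons_succ, List.length_cons] at this ⊢
      have h2 : rest.length + 1 + 1 - (j + 1) = rest.length + 1 - j := by omega
      rw [h2] at this
      exact this

theorem stmt15 (n : ℕ) (hn : 1 ≤ n) (a : List ℕ)
    (hinc : a.Chain' (· < ·)) (hbd : ∀ x ∈ a, 1 ≤ x ∧ x ≤ 2 * n)
    (hlen : a.length ≤ 2 * n) :
    redSeq a = a ↔ ∀ i, 1 ≤ i → i ≤ a.length → 2 * i - 1 ≤ a.getD (i - 1) 0 := by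
  have hch : a.reverse.Chain' (· > ·) := by
    rw [List.Chain', List.isChain_reverse]
    exact hinc
  have hpos : ∀ x ∈ a.reverse, 1 ≤ x := fun x hx => (hbd x (by simpa using hx)).1
  have hmain := remAux_main a.reverse hch hpos
  have h1 : redSeq a = a ↔ remSet a = ∅ := by
    rw [redSeq, List.filter_eq_self]
    constructor
    · intro h
      rw [Finset.eq_empty_iff_forall_notMem]
      intro x hx
      have hxa : x ∈ a := by
        have := remAux_subset_s15 a.reverse x hx
        simpa using this
      have := h x hxa
      simp at this
      exact this hx
    · intro h x hx
      simp [h]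
  rw [h1, remSet, hmain, List.length_reverse]
  constructor
  · intro hP i h1i hil
    have hj : a.length - i < a.length := by omega
    have := hP (a.length - i) hj
    rw [getD_reverse _ _ (by omega)] at this
    have he1 : a.length - 1 - (a.length - i) = i - 1 := by omega
    have he2 : a.length - (a.length - i) = i := by omega
    rw [he1, he2] at this
    exact this
  · intro hP j hj
    have := hP (a.length - j) (by omega) (by omega)
    rw [getD_reverse _ _ (by omega)]
    have he1 : a.length - j - 1 = a.length - 1 - j := by omega
    have he2 : 2 * (a.length - j) - 1 = 2 * (a.length - j) - 1 := rfl
    rw [he1] at this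
    exact this
end
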